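/- Let M be a discrete m-function whose continued fraction coefficients (a_n,b_n)_{n≥1} are eventually periodic, i.e., there exist k ≥ 0 and p ≥ 1 with a_{n+p} = a_n and b_{n+p} = b_n for all n > k. Then M is a quadratic irrationality: there exist polynomials α, β, γ ∈ ℝ[z] with α not identically zero such that α(z)M(z)² + β(z)M(z) + γ(z) = 0 for all z ∈ ℂ₊. -/

import Mathlib

open MeasureTheory Polynomial Filter Metric

noncomputable section

/-- A discrete m-function: the Cauchy transform of a compactly supported
probability measure on `ℝ`, viewed as a function on the upper half plane
`ℂ₊ = {z : 0 < z.im}`. -/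
def IsDiscreteMFunction (m : ℂ → ℂ) : Prop :=
  ∃ ρ : Measure ℝ, IsProbabilityMeasure ρ ∧ (∃ t : ℝ, ρ (Set.Icc (-t) t) = 1) ∧
    ∀ z : ℂ, 0 < z.im → m z = ∫ x : ℝ, ((x : ℂ) - z)⁻¹ ∂ρ

/-- `m` has continued fraction (Jacobi) coefficients `{(a n, b n)}_{n ≥ 1}`
(sequences indexed from 1; index 0 unused) with stripping sequence `ms`. -/
def HasJacobiCoeffs (m : ℂ → ℂ) (a b : ℕ → ℝ) (ms : ℕ → ℂ → ℂ) : Prop :=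
  ms 0 = m ∧ (∀ n, IsDiscreteMFunction (ms n)) ∧
    ∀ n, ∀ z : ℂ, 0 < z.im →
      ms n z = ((b (n + 1) : ℂ) - z - (a (n + 1) : ℂ) ^ 2 * ms (n + 1) z)⁻¹

/-- Shifted first-kind polynomials: `pShift a b (j+1) = p_j(·; {a_i, b_i}_{i=1}^j)`,
so `pShift a b 0 = p₋₁ = 0`, `pShift a b 1 = p₀ = 1`, and the recurrence
`z p_j = a_{j+1} p_{j+1} + b_{j+1} p_j + a_j p_{j-1}` holds. -/
def pShift (a b : ℕ → ℝ) : ℕ → ℂ → ℂ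
  | 0 => fun _ => 0
  | 1 => fun _ => 1
  | (n + 2) => fun z =>
      ((z - (b (n + 1) : ℂ)) * pShift a b (n + 1) z - (a n : ℂ) * pShift a b n z) /
        (a (n + 1) : ℂ)

/-- The first-kind polynomial `p_n(z; {a_j, b_j}_{j=1}^n)`. -/
def firstKind (a b : ℕ → ℝ) (n : ℕ) : ℂ → ℂ := pShift a b (n + 1)

/-- The second-kind polynomial `q_n(z; {a_j, b_j}_{j=1}^n) = a₁⁻¹ p_{n-1}(z; {a_j, b_j}_{j=2}^n)`,
with `q₀ = 0`. -/
def secondKind (a b : ℕ → ℝ) (n : ℕ) : ℂ → ℂ :=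
  fun z => ((a 1 : ℂ))⁻¹ * pShift (fun j => a (j + 1)) (fun j => b (j + 1)) n z

/-- The conjugated transfer matrix `T_n = [[p_n, q_n], [-a_n p_{n-1}, -a_n q_{n-1}]]`
of the parameters `(a_j, b_j)_{j=1}^n`. -/
def ctm (a b : ℕ → ℝ) (n : ℕ) : Matrix (Fin 2) (Fin 2) (ℂ → ℂ) :=
  !![firstKind a b n, secondKind a b n;
     (fun z => -(a n : ℂ) * firstKind a b (n - 1) z),
     (fun z => -(a n : ℂ) * secondKind a b (n - 1) z)]

/-- The finite string `(s (start+1), …, s (start+len))` is a palindrome. -/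
def PalSeg {α : Type*} (s : ℕ → α) (start len : ℕ) : Prop :=
  ∀ i, 1 ≤ i → i ≤ len → s (start + i) = s (start + (len + 1 - i))

/-- The pair of `p`-periodic sequences `(a, b)` is doubly palindromic with period `p`
and first length `ℓ` (`1 ≤ ℓ ≤ p - 2`): `(a₁,…,a_ℓ)` and `(a_{ℓ+1},…,a_p)` are palindromes,
and `(b₁,…,b_{ℓ+1})` and `(b_{ℓ+2},…,b_p)` are palindromes. -/
def DoublyPalindromic (a b : ℕ → ℝ) (p ℓ : ℕ) : Prop :=
  1 ≤ ℓ ∧ ℓ + 2 ≤ p ∧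
    PalSeg a 0 ℓ ∧ PalSeg a ℓ (p - ℓ) ∧
    PalSeg b 0 (ℓ + 1) ∧ PalSeg b (ℓ + 1) (p - (ℓ + 1))

namespace QIaux


lemma sub_ne_zero_of_im (x : ℝ) (z : ℂ) (hz : 0 < z.im) : (x : ℂ) - z ≠ 0 := by
  intro h
  have : ((x : ℂ) - z).im = 0 := by rw [h]; simp
  simp only [Complex.sub_im, Complex.ofReal_im, zero_sub, neg_eq_zero] at this
  linarith

lemma im_le_norm_sub (x : ℝ) (z : ℂ) : z.im ≤ ‖(x : ℂ) - z‖ := by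
  have h1 : |((x : ℂ) - z).im| ≤ ‖(x : ℂ) - z‖ := Complex.abs_im_le_norm _
  simp only [Complex.sub_im, Complex.ofReal_im, zero_sub, abs_neg] at h1
  exact (le_abs_self _).trans h1

lemma norm_inv_sub_le (x : ℝ) (z : ℂ) (hz : 0 < z.im) : ‖((x : ℂ) - z)⁻¹‖ ≤ (z.im)⁻¹ := by
  rw [norm_inv]
  exact inv_anti₀ hz (im_le_norm_sub x z)

lemma im_inv_sub_pos (x : ℝ) (z : ℂ) (hz : 0 < z.im) :
    0 < (((x : ℂ) - z)⁻¹).im := by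
  rw [Complex.inv_im]
  have hne : (x : ℂ) - z ≠ 0 := sub_ne_zero_of_im x z hz
  have h2 : 0 < Complex.normSq ((x : ℂ) - z) := Complex.normSq_pos.2 hne
  have h3 : ((x : ℂ) - z).im = -z.im := by simp
  rw [h3, neg_neg]
  positivity

lemma integrable_inv_sub (ρ : Measure ℝ) [IsProbabilityMeasure ρ] (z : ℂ) (hz : 0 < z.im) :
    Integrable (fun x : ℝ => ((x : ℂ) - z)⁻¹) ρ := by
  have hc : Continuous (fun x : ℝ => ((x : ℂ) - z)⁻¹) := by
    apply Continuous.inv₀ (by continuity)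
    exact fun x => sub_ne_zero_of_im x z hz
  refine Integrable.mono' (integrable_const ((z.im)⁻¹)) hc.aestronglyMeasurable ?_
  exact Eventually.of_forall fun x => norm_inv_sub_le x z hz

/-- A discrete m-function has positive imaginary part on ℂ₊ (in particular never 0). -/
lemma mfun_im_pos {m : ℂ → ℂ} (hm : IsDiscreteMFunction m) (z : ℂ) (hz : 0 < z.im) :
    0 < (m z).im := by
  obtain ⟨ρ, hρ, ⟨t, ht⟩, hrep⟩ := hm
  rw [hrep z hz]
  have hint0 := integral_im (μ := ρ) (f := fun x : ℝ => ((x:ℂ)-z)⁻¹) (integrable_inv_sub ρ z hz)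
  simp only [RCLike.im_to_complex] at hint0
  rw [← hint0]
  have h0 : ∀ x : ℝ, 0 < (((x : ℂ) - z)⁻¹).im := fun x => im_inv_sub_pos x z hz
  have hint : Integrable (fun x : ℝ => (((x : ℂ) - z)⁻¹).im) ρ :=
    (integrable_inv_sub ρ z hz).im
  rw [integral_pos_iff_support_of_nonneg (fun x => (h0 x).le) hint]
  have : Function.support (fun x : ℝ => (((x : ℂ) - z)⁻¹).im) = Set.univ := by
    ext x
    simp only [Function.mem_support, Set.mem_univ, iff_true]
    exact (h0 x).ne'
  rw [this]
  simp



lemma exists_moments {m : ℂ → ℂ} (hm : IsDiscreteMFunction m) :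
    ∃ (t : ℝ) (μ : ℕ → ℝ), 0 ≤ t ∧ μ 0 = 1 ∧ (∀ j, |μ j| ≤ t ^ j) ∧
      ∀ z : ℂ, 0 < z.im → t < ‖z‖ → m z = -∑' j : ℕ, (μ j : ℂ) * (z⁻¹) ^ (j + 1) := by
  obtain ⟨ρ, hρ, ⟨t, ht⟩, hrep⟩ := hm
  have ht0 : 0 ≤ t := by
    by_contra h
    push_neg at h
    rw [Set.Icc_eq_empty (by intro hc; linarith)] at ht
    simp at ht
  have hae : ∀ᵐ x ∂ρ, |x| ≤ t := by
    have hco : ρ (Set.Icc (-t) t)ᶜ = 0 := by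
      rw [measure_compl measurableSet_Icc (measure_ne_top ρ _), ht]
      simp
    refine measure_mono_null ?_ hco
    intro x hx
    simp only [Set.mem_compl_iff, Set.mem_Icc, Set.mem_setOf_eq] at *
    rw [abs_le] at hx
    tauto
  refine ⟨t, fun j => ∫ x, x ^ j ∂ρ, ht0, ?_, ?_, ?_⟩
  · simp
  · intro j
    have h1 : |∫ x, x ^ j ∂ρ| ≤ ∫ x, |x ^ j| ∂ρ := by
      simpa [Real.norm_eq_abs] using
        norm_integral_le_integral_norm (μ := ρ) (f := fun x : ℝ => x ^ j)
    have hint : Integrable (fun x : ℝ => x ^ j) ρ := by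
      refine Integrable.mono' (integrable_const (t ^ j))
        (Continuous.aestronglyMeasurable (by continuity)) ?_
      filter_upwards [hae] with x hx
      rw [Real.norm_eq_abs, abs_pow]
      exact pow_le_pow_left₀ (abs_nonneg x) hx j
    refine h1.trans ?_
    have h2 : ∫ x, |x ^ j| ∂ρ ≤ ∫ _x, t ^ j ∂ρ := by
      refine integral_mono_ae hint.abs (integrable_const _) ?_
      filter_upwards [hae] with x hx
      rw [abs_pow]
      exact pow_le_pow_left₀ (abs_nonneg x) hx j
    simpa using h2
  · intro z hz hzt
    have hzne : z ≠ 0 := by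
      intro h; rw [h] at hz; simp at hz
    set w := z⁻¹ with hw
    have hwn : ‖w‖ = ‖z‖⁻¹ := by rw [hw, norm_inv]
    have hnz : (0:ℝ) < ‖z‖ := lt_of_le_of_lt ht0 hzt
    have htw : t * ‖w‖ < 1 := by
      rw [hwn]
      rw [← div_eq_mul_inv, div_lt_one hnz]
      exact hzt
    set F : ℕ → ℝ → ℂ := fun j x => (x : ℂ) ^ j * w ^ (j + 1) with hF
    have hFmeas : ∀ j, AEStronglyMeasurable (F j) ρ :=
      fun j => Continuous.aestronglyMeasurable (by continuity)
    have hFbd : ∀ j, ∀ᵐ x ∂ρ, ‖F j x‖ ≤ t ^ j * ‖w‖ ^ (j + 1) := by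
      intro j
      filter_upwards [hae] with x hx
      rw [hF]
      simp only [norm_mul, norm_pow, Complex.norm_real]
      exact mul_le_mul_of_nonneg_right
        (by rw [Real.norm_eq_abs]; exact pow_le_pow_left₀ (abs_nonneg x) hx j)
        (by positivity)
    have hFint : ∀ j, Integrable (F j) ρ := by
      intro j
      exact Integrable.mono' (integrable_const _) (hFmeas j) (hFbd j)
    have hFn : ∀ j, ∫ x, ‖F j x‖ ∂ρ ≤ t ^ j * ‖w‖ ^ (j + 1) := by
      intro j
      have := integral_mono_ae (hFint j).norm (integrable_const (t ^ j * ‖w‖ ^ (j + 1))) (hFbd j)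
      simpa using this
    have hsum : Summable fun j => ∫ x, ‖F j x‖ ∂ρ := by
      refine Summable.of_nonneg_of_le (fun j => integral_nonneg fun x => norm_nonneg _)
        hFn ?_
      have : Summable fun j : ℕ => (t * ‖w‖) ^ j * ‖w‖ := by
        exact (summable_geometric_of_lt_one (by positivity) htw).mul_right _
      refine this.congr fun j => ?_
      rw [mul_pow, pow_succ]
      ring
    have key := hasSum_integral_of_summable_integral_norm hFint hsum
    have haes : ∀ᵐ x ∂ρ, (∑' j, F j x) = -((x : ℂ) - z)⁻¹ := by
      filter_upwards [hae] with x hx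
      have hxw : ‖(x : ℂ) * w‖ < 1 := by
        rw [norm_mul, Complex.norm_real]
        calc |x| * ‖w‖ ≤ t * ‖w‖ := by
              exact mul_le_mul_of_nonneg_right hx (norm_nonneg _)
          _ < 1 := htw
      have h1 : ∀ j, F j x = ((x : ℂ) * w) ^ j * w := by
        intro j; rw [hF]; simp only; rw [mul_pow, pow_succ]; ring
      calc (∑' j, F j x) = (∑' j, ((x : ℂ) * w) ^ j) * w := by
            rw [← tsum_mul_right]; exact tsum_congr h1
        _ = (1 - (x : ℂ) * w)⁻¹ * w := by rw [tsum_geometric_of_norm_lt_one hxw]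
        _ = -((x : ℂ) - z)⁻¹ := by
            have h2 : (1 : ℂ) - (x : ℂ) * w ≠ 0 := by
              intro h
              have : ((x : ℂ) * w) = 1 := by linear_combination -h
              rw [this] at hxw
              simp at hxw
            have h3 : (x : ℂ) - z ≠ 0 := by
              intro h
              have : ((x : ℂ) - z).im = 0 := by rw [h]; simp
              simp only [Complex.sub_im, Complex.ofReal_im, zero_sub, neg_eq_zero] at this
              linarith
            rw [hw]
            have hD : (-(z * (x : ℂ)) + z ^ 2) ≠ 0 := by
              have he : -(z * (x : ℂ)) + z ^ 2 = z * (z - x) := by ring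
              rw [he]
              refine mul_ne_zero hzne ?_
              intro h
              exact h3 (by linear_combination -h)
            rw [neg_inv, neg_sub, ← mul_inv]
            congr 1
            rw [sub_mul, mul_assoc, inv_mul_cancel₀ hzne]
            ring
    have hrw : ∫ x, (∑' j, F j x) ∂ρ = - m z := by
      rw [hrep z hz, ← integral_neg]
      exact integral_congr_ae (haes.mono fun x hx => by simpa using hx)
    have hFj : ∀ j, ∫ x, F j x ∂ρ = ((∫ x, x ^ j ∂ρ : ℝ) : ℂ) * w ^ (j + 1) := by
      intro j
      rw [hF]
      simp only
      rw [integral_mul_const]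
      congr 1
      rw [show (fun x : ℝ => (x : ℂ) ^ j) = fun x : ℝ => ((x ^ j : ℝ) : ℂ) by
        ext x; push_cast; ring]
      exact integral_ofReal
    have h4 : m z = - ∑' j, (∫ x, F j x ∂ρ) := by
      rw [key.tsum_eq, hrw, neg_neg]
    rw [h4]
    congr 1
    exact tsum_congr fun j => hFj j



lemma normIy (y : ℝ) (hy : 0 < y) : ‖(Complex.I * (y : ℂ))⁻¹‖ = y⁻¹ := by
  rw [norm_inv, norm_mul, Complex.norm_I, one_mul, Complex.norm_real,
    Real.norm_eq_abs, abs_of_pos hy]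

lemma summable_cw (c : ℕ → ℂ) (C r : ℝ) (hr : 0 < r)
    (hb : ∀ i, ‖c i‖ ≤ C * r ^ i) (y : ℝ) (hy : 0 < y) (hry : r < y) :
    Summable fun i => c i * ((Complex.I * (y : ℂ))⁻¹) ^ i := by
  have hg : Summable fun i : ℕ => C * (r / y) ^ i := by
    refine Summable.mul_left C (summable_geometric_of_lt_one (by positivity) ?_)
    rw [div_lt_one hy]; exact hry
  refine Summable.of_norm_bounded hg fun i => ?_
  rw [norm_mul, norm_pow, normIy y hy]
  calc ‖c i‖ * (y⁻¹) ^ i ≤ (C * r ^ i) * (y⁻¹) ^ i :=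
        mul_le_mul_of_nonneg_right (hb i) (by positivity)
    _ = C * (r / y) ^ i := by rw [div_eq_mul_inv, mul_pow]; ring

lemma coeff_head (c : ℕ → ℂ) (C r R : ℝ) (hr : 0 < r) (hR : 0 ≤ R)
    (hb : ∀ i, ‖c i‖ ≤ C * r ^ i)
    (hz : ∀ y : ℝ, R < y → ∑' i, c i * ((Complex.I * (y : ℂ))⁻¹) ^ i = 0) :
    c 0 = 0 := by
  have hC : 0 ≤ C := by have := (norm_nonneg (c 0)).trans (hb 0); simpa using this
  have key : ∀ ε : ℝ, 0 < ε → ‖c 0‖ ≤ ε := by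
    intro ε hε
    set y : ℝ := max (2 * max R r + 1) (2 * C * r / ε + 1) with hy
    have hy1 : 2 * max R r + 1 ≤ y := le_max_left _ _
    have hy2 : 2 * C * r / ε + 1 ≤ y := le_max_right _ _
    have hymax : max R r < y := by
      have h1 : (0:ℝ) ≤ max R r := le_trans hR (le_max_left _ _)
      linarith
    have hyR : R < y := lt_of_le_of_lt (le_max_left _ _) hymax
    have hyr : r < y := lt_of_le_of_lt (le_max_right _ _) hymax
    have hy0 : 0 < y := lt_trans hr hyr
    set w : ℂ := (Complex.I * (y : ℂ))⁻¹ with hw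
    have hsum : Summable fun i => c i * w ^ i := summable_cw c C r hr hb y hy0 hyr
    have h0 := hz y hyR
    rw [Summable.tsum_eq_zero_add hsum] at h0
    simp only [pow_zero, mul_one] at h0
    have hshift : c 0 = -∑' i, c (i + 1) * w ^ (i + 1) := by linear_combination h0
    rw [hshift, norm_neg]
    have hb2 : ∀ i : ℕ, ‖c (i + 1) * w ^ (i + 1)‖ ≤ (C * r / y) * (r / y) ^ i := by
      intro i
      rw [norm_mul, norm_pow, hw, normIy y hy0]
      calc ‖c (i+1)‖ * (y⁻¹) ^ (i+1) ≤ (C * r ^ (i+1)) * (y⁻¹) ^ (i+1) :=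
            mul_le_mul_of_nonneg_right (hb (i+1)) (by positivity)
        _ = (C * r / y) * (r / y) ^ i := by
            rw [div_eq_mul_inv, div_eq_mul_inv, mul_pow, pow_succ, pow_succ]
            ring
    have hg2 : Summable fun i : ℕ => (C * r / y) * (r / y) ^ i := by
      refine Summable.mul_left _ (summable_geometric_of_lt_one (by positivity) ?_)
      rw [div_lt_one hy0]; exact hyr
    have hnorm : ‖∑' i, c (i + 1) * w ^ (i + 1)‖ ≤ (C * r / y) * (1 - r / y)⁻¹ := by
      have h1 := norm_tsum_le_tsum_norm (hg2.of_nonneg_of_le (fun i => norm_nonneg _) hb2)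
      refine h1.trans ?_
      have h2 := (hg2.of_nonneg_of_le (fun i => norm_nonneg _) hb2).tsum_le_tsum hb2 hg2
      refine h2.trans ?_
      rw [tsum_mul_left, tsum_geometric_of_lt_one (by positivity) (by rw [div_lt_one hy0]; exact hyr)]
    refine hnorm.trans ?_
    have hhalf : r / y ≤ 1 / 2 := by
      rw [div_le_div_iff₀ hy0 (by norm_num)]
      nlinarith [le_trans hR (le_max_left R r), le_max_right R r]
    have hinv : (1 - r / y)⁻¹ ≤ 2 := by
      rw [inv_le_comm₀ (by linarith [div_nonneg hr.le hy0.le]) (by norm_num)]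
      linarith
    have hcry : C * r / y ≤ ε / 2 := by
      rw [div_le_iff₀ hy0]
      have : 2 * C * r / ε + 1 ≤ y := hy2
      have h3 : 2 * C * r / ε < y := by linarith
      rw [div_lt_iff₀ hε] at h3
      nlinarith
    calc C * r / y * (1 - r / y)⁻¹ ≤ (ε / 2) * 2 := by
          refine mul_le_mul hcry hinv (inv_nonneg.2 (by linarith)) (by positivity)
      _ = ε := by ring
  by_contra hne
  have hpos : 0 < ‖c 0‖ := norm_pos_iff.mpr hne
  have := key (‖c 0‖ / 2) (by positivity)
  linarith

lemma coeff_extract (j : ℕ) : ∀ (c : ℕ → ℂ) (C r R : ℝ), 0 < r → 0 ≤ R →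
    (∀ i, ‖c i‖ ≤ C * r ^ i) →
    (∀ y : ℝ, R < y → ∑' i, c i * ((Complex.I * (y : ℂ))⁻¹) ^ i = 0) → c j = 0 := by
  induction j with
  | zero => exact fun c C r R hr hR hb hz => coeff_head c C r R hr hR hb hz
  | succ j ih =>
    intro c C r R hr hR hb hz
    have h0 : c 0 = 0 := coeff_head c C r R hr hR hb hz
    have hz' : ∀ y : ℝ, max R r < y →
        ∑' i, c (i + 1) * ((Complex.I * (y : ℂ))⁻¹) ^ i = 0 := by
      intro y hy
      have hyR : R < y := lt_of_le_of_lt (le_max_left _ _) hy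
      have hyr : r < y := lt_of_le_of_lt (le_max_right _ _) hy
      have hy0 : 0 < y := lt_trans hr hyr
      set w : ℂ := (Complex.I * (y : ℂ))⁻¹ with hw
      have hwne : w ≠ 0 := by
        rw [hw]
        apply inv_ne_zero
        apply mul_ne_zero Complex.I_ne_zero
        exact_mod_cast ne_of_gt hy0
      have hsum : Summable fun i => c i * w ^ i := summable_cw c C r hr hb y hy0 hyr
      have h1 := hz y hyR
      rw [Summable.tsum_eq_zero_add hsum] at h1
      simp only [pow_zero, mul_one, h0, zero_add] at h1
      have h2 : ∑' i, c (i + 1) * w ^ (i + 1) = (∑' i, c (i + 1) * w ^ i) * w := by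
        rw [← tsum_mul_right]
        exact tsum_congr fun i => by rw [pow_succ]; ring
      rw [h2, mul_eq_zero] at h1
      tauto
    have := ih (fun i => c (i + 1)) (C * r) r (max R r) hr
      (le_trans hR (le_max_left _ _))
      (fun i => by
        calc ‖c (i + 1)‖ ≤ C * r ^ (i + 1) := hb (i + 1)
          _ = C * r * r ^ i := by rw [pow_succ]; ring)
      hz'
    exact this


/-- the Cauchy-product coefficient sequence -/
def qSeq (μ ν : ℕ → ℝ) (N : ℕ) : ℝ := ∑ ij ∈ Finset.HasAntidiagonal.antidiagonal N, μ ij.1 * ν ij.2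

/-- the coefficient sequence of the continued-fraction relation -/
def crSeq (A B : ℝ) (μ ν : ℕ → ℝ) : ℕ → ℝ
  | 0 => μ 0 - 1
  | 1 => μ 1 - B * μ 0
  | (N + 2) => μ (N + 2) - B * μ (N + 1) - A ^ 2 * qSeq μ ν N

lemma moment_rec (A B : ℝ) (μ ν : ℕ → ℝ) (t s : ℝ) (ht : 0 ≤ t) (hs : 0 ≤ s)
    (hμb : ∀ j, |μ j| ≤ t ^ j) (hνb : ∀ j, |ν j| ≤ s ^ j)
    (m m' : ℂ → ℂ)
    (hmr : ∀ z : ℂ, 0 < z.im → t < ‖z‖ → m z = -∑' j : ℕ, (μ j : ℂ) * (z⁻¹) ^ (j + 1))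
    (hm'r : ∀ z : ℂ, 0 < z.im → s < ‖z‖ → m' z = -∑' j : ℕ, (ν j : ℂ) * (z⁻¹) ^ (j + 1))
    (hrel : ∀ z : ℂ, 0 < z.im → m z * ((B : ℂ) - z - (A : ℂ) ^ 2 * m' z) = 1) :
    μ 1 = B * μ 0 ∧
      ∀ N, μ (N + 2) = B * μ (N + 1) +
        A ^ 2 * ∑ ij ∈ Finset.HasAntidiagonal.antidiagonal N, μ ij.1 * ν ij.2 := by
  set r0 : ℝ := max (max t s) 1 with hr0def
  have hr01 : 1 ≤ r0 := le_max_right _ _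
  have hr0t : t ≤ r0 := le_trans (le_max_left _ _) (le_max_left _ _)
  have hr0s : s ≤ r0 := le_trans (le_max_right _ _) (le_max_left _ _)
  have hr0pos : 0 < r0 := lt_of_lt_of_le one_pos hr01
  have hqb : ∀ N, |qSeq μ ν N| ≤ (N + 1) * r0 ^ N := by
    intro N
    calc |qSeq μ ν N| ≤ ∑ ij ∈ Finset.HasAntidiagonal.antidiagonal N, |μ ij.1 * ν ij.2| :=
          Finset.abs_sum_le_sum_abs _ _
      _ ≤ ∑ _ij ∈ Finset.HasAntidiagonal.antidiagonal N, r0 ^ N := by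
          refine Finset.sum_le_sum fun ij hij => ?_
          rw [Finset.HasAntidiagonal.mem_antidiagonal] at hij
          rw [abs_mul]
          calc |μ ij.1| * |ν ij.2| ≤ t ^ ij.1 * s ^ ij.2 :=
                mul_le_mul (hμb _) (hνb _) (abs_nonneg _) (by positivity)
            _ ≤ r0 ^ ij.1 * r0 ^ ij.2 :=
                mul_le_mul (pow_le_pow_left₀ ht hr0t _) (pow_le_pow_left₀ hs hr0s _)
                  (by positivity) (by positivity)
            _ = r0 ^ N := by rw [← pow_add, hij]
      _ = (N + 1) * r0 ^ N := by
          rw [Finset.sum_const, Finset.Nat.card_antidiagonal, nsmul_eq_mul]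
          push_cast; ring
  have hμ01 : |μ 0| ≤ 1 := by simpa using hμb 0
  set C : ℝ := 2 + |B| + A ^ 2 with hCdef
  have hC2 : 2 ≤ C := by nlinarith [abs_nonneg B, sq_nonneg A]
  have hbound : ∀ N, ‖((crSeq A B μ ν N : ℝ) : ℂ)‖ ≤ C * (2 * r0) ^ N := by
    intro N
    rw [Complex.norm_real, Real.norm_eq_abs]
    match N with
    | 0 =>
      show |μ 0 - 1| ≤ C * (2 * r0) ^ 0
      rw [pow_zero, mul_one]
      calc |μ 0 - 1| ≤ |μ 0| + |(1:ℝ)| := abs_sub _ _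
        _ ≤ 2 := by rw [abs_one]; linarith
        _ ≤ C := hC2
    | 1 =>
      have h1 : |μ 1 - B * μ 0| ≤ r0 + |B| := by
        calc |μ 1 - B * μ 0| ≤ |μ 1| + |B * μ 0| := abs_sub _ _
          _ ≤ t + |B| * 1 := by
              have e1 : |μ 1| ≤ t := by simpa using hμb 1
              have e2 : |B * μ 0| ≤ |B| * 1 := by
                rw [abs_mul]
                exact mul_le_mul_of_nonneg_left hμ01 (abs_nonneg B)
              exact add_le_add e1 e2
          _ ≤ r0 + |B| := by linarith
      have h2 : r0 + |B| ≤ C * (2 * r0) ^ 1 := by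
        rw [pow_one]
        nlinarith [abs_nonneg B, sq_nonneg A]
      show |μ 1 - B * μ 0| ≤ C * (2 * r0) ^ 1
      exact h1.trans h2
    | (N + 2) =>
      have hP : (N + 1 : ℝ) ≤ 2 ^ (N + 2) := by
        have h1 : N + 1 ≤ 2 ^ N := Nat.lt_two_pow_self
        have h2 : (2:ℕ) ^ N ≤ 2 ^ (N + 2) := Nat.pow_le_pow_right (by norm_num) (by omega)
        exact_mod_cast h1.trans h2
      have hP4 : (4 : ℝ) ≤ 2 ^ (N + 2) := by
        have : (2:ℝ) ^ 2 ≤ 2 ^ (N + 2) := by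
          apply pow_le_pow_right₀ (by norm_num) (by omega)
        norm_num at this ⊢
        linarith
      have ht1 : t ^ (N + 2) ≤ r0 ^ (N + 2) := pow_le_pow_left₀ ht hr0t _
      have ht2 : t ^ (N + 1) ≤ r0 ^ (N + 2) := by
        calc t ^ (N + 1) ≤ r0 ^ (N + 1) := pow_le_pow_left₀ ht hr0t _
          _ ≤ r0 ^ (N + 2) := pow_le_pow_right₀ hr01 (by omega)
      have ht3 : r0 ^ N ≤ r0 ^ (N + 2) := pow_le_pow_right₀ hr01 (by omega)
      have h1 : |crSeq A B μ ν (N + 2)| ≤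
          r0 ^ (N + 2) + |B| * r0 ^ (N + 2) + A ^ 2 * ((N + 1) * r0 ^ N) := by
        show |μ (N + 2) - B * μ (N + 1) - A ^ 2 * qSeq μ ν N| ≤ _
        calc |μ (N + 2) - B * μ (N + 1) - A ^ 2 * qSeq μ ν N|
            ≤ |μ (N + 2)| + |B * μ (N + 1)| + |A ^ 2 * qSeq μ ν N| := by
              have := abs_sub (μ (N + 2) - B * μ (N + 1)) (A ^ 2 * qSeq μ ν N)
              have h2 := abs_sub (μ (N + 2)) (B * μ (N + 1))
              linarith
          _ ≤ r0 ^ (N + 2) + |B| * r0 ^ (N + 2) + A ^ 2 * ((N + 1) * r0 ^ N) := by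
              rw [abs_mul, abs_mul, _root_.abs_pow, _root_.sq_abs]
              gcongr
              · exact (hμb _).trans ht1
              · exact (hμb _).trans ht2
              · exact hqb N
          _ = _ := rfl
      refine h1.trans ?_
      have hr0N : (0:ℝ) < r0 ^ (N + 2) := by positivity
      rw [mul_pow]
      have hkey : 1 + |B| + A ^ 2 * (N + 1) ≤ C * 2 ^ (N + 2) := by
        have hB0 := abs_nonneg B
        have hA0 := sq_nonneg A
        nlinarith
      calc r0 ^ (N + 2) + |B| * r0 ^ (N + 2) + A ^ 2 * ((N + 1) * r0 ^ N)
          ≤ r0 ^ (N + 2) + |B| * r0 ^ (N + 2) + A ^ 2 * ((N + 1) * r0 ^ (N + 2)) := by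
            gcongr
        _ = (1 + |B| + A ^ 2 * (N + 1)) * r0 ^ (N + 2) := by ring
        _ ≤ (C * 2 ^ (N + 2)) * r0 ^ (N + 2) := by gcongr
        _ = C * (2 ^ (N + 2) * r0 ^ (N + 2)) := by ring
  -- main functional identity at points z = i y
  have hz : ∀ y : ℝ, 2 * r0 < y →
      ∑' N, ((crSeq A B μ ν N : ℝ) : ℂ) * ((Complex.I * (y : ℂ))⁻¹) ^ N = 0 := by
    intro y hy
    have hy0 : 0 < y := by linarith
    have hyr0 : r0 < y := by linarith
    set z : ℂ := Complex.I * (y : ℂ) with hzdef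
    set w : ℂ := z⁻¹ with hwdef
    have hzim : 0 < z.im := by
      rw [hzdef]
      simp only [Complex.mul_im, Complex.I_re, Complex.I_im, Complex.ofReal_re,
        Complex.ofReal_im, zero_mul, one_mul, zero_add]
      exact hy0
    have hznorm : ‖z‖ = y := by
      rw [hzdef, norm_mul, Complex.norm_I, one_mul, Complex.norm_real,
        Real.norm_eq_abs, abs_of_pos hy0]
    have hzne : z ≠ 0 := by
      intro h
      rw [h] at hznorm
      simp at hznorm
      linarith
    have hwz : w * z = 1 := inv_mul_cancel₀ hzne
    -- summability of the basic series
    have hsum_μ : Summable fun i => (μ i : ℂ) * w ^ i :=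
      summable_cw (fun i => (μ i : ℂ)) 1 r0 hr0pos
        (fun i => by
          rw [Complex.norm_real, Real.norm_eq_abs, one_mul]
          exact (hμb i).trans (pow_le_pow_left₀ ht hr0t i)) y hy0 hyr0
    have hsum_ν : Summable fun i => (ν i : ℂ) * w ^ i :=
      summable_cw (fun i => (ν i : ℂ)) 1 r0 hr0pos
        (fun i => by
          rw [Complex.norm_real, Real.norm_eq_abs, one_mul]
          exact (hνb i).trans (pow_le_pow_left₀ hs hr0s i)) y hy0 hyr0
    have hsum_μ1 : Summable fun i => (μ (i + 1) : ℂ) * w ^ i :=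
      summable_cw (fun i => (μ (i + 1) : ℂ)) r0 r0 hr0pos
        (fun i => by
          rw [Complex.norm_real, Real.norm_eq_abs]
          calc |μ (i + 1)| ≤ t ^ (i + 1) := hμb _
            _ ≤ r0 ^ (i + 1) := pow_le_pow_left₀ ht hr0t _
            _ = r0 * r0 ^ i := by rw [pow_succ]; ring) y hy0 hyr0
    have hsum_μ2 : Summable fun i => (μ (i + 2) : ℂ) * w ^ i :=
      summable_cw (fun i => (μ (i + 2) : ℂ)) (r0 ^ 2) r0 hr0pos
        (fun i => by
          rw [Complex.norm_real, Real.norm_eq_abs]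
          calc |μ (i + 2)| ≤ t ^ (i + 2) := hμb _
            _ ≤ r0 ^ (i + 2) := pow_le_pow_left₀ ht hr0t _
            _ = r0 ^ 2 * r0 ^ i := by rw [← pow_add]; ring_nf) y hy0 hyr0
    have hsum_q : Summable fun N => (qSeq μ ν N : ℂ) * w ^ N := by
      have hxlt : |r0 / y| < 1 := by
        rw [abs_of_pos (by positivity), div_lt_one hy0]; exact hyr0
      have hg1 : Summable fun n : ℕ => (n : ℝ) ^ 1 * (r0 / y) ^ n := by
        have := summable_pow_mul_geometric_of_norm_lt_one (R := ℝ) 1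
          (r := r0 / y) (by rwa [Real.norm_eq_abs])
        exact this
      have hg2 : Summable fun n : ℕ => (r0 / y) ^ n :=
        summable_geometric_of_lt_one (by positivity) (by rwa [abs_of_pos (by positivity)] at hxlt)
      have hgs : Summable fun n : ℕ => ((n : ℝ) ^ 1 * (r0 / y) ^ n + (r0 / y) ^ n) := hg1.add hg2
      refine Summable.of_norm_bounded hgs fun N => ?_
      rw [norm_mul, norm_pow, Complex.norm_real, Real.norm_eq_abs, hwdef, hzdef, normIy y hy0]
      calc |qSeq μ ν N| * (y⁻¹) ^ N ≤ ((N + 1) * r0 ^ N) * (y⁻¹) ^ N :=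
            mul_le_mul_of_nonneg_right (hqb N) (by positivity)
        _ = (N : ℝ) ^ 1 * (r0 / y) ^ N + (r0 / y) ^ N := by
            rw [div_eq_mul_inv, mul_pow]; ring
    have hsum_cre : Summable fun N => ((crSeq A B μ ν N : ℝ) : ℂ) * w ^ N :=
      summable_cw _ C (2 * r0) (by positivity) hbound y hy0 hy
    -- the series values
    set U : ℂ := ∑' i, (μ i : ℂ) * w ^ i with hUdef
    set V : ℂ := ∑' i, (ν i : ℂ) * w ^ i with hVdef
    set S1 : ℂ := ∑' i, (μ (i + 1) : ℂ) * w ^ i with hS1def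
    set S2 : ℂ := ∑' i, (μ (i + 2) : ℂ) * w ^ i with hS2def
    set QW : ℂ := ∑' N, (qSeq μ ν N : ℂ) * w ^ N with hQWdef
    have hmz : m z = -(U * w) := by
      rw [hmr z hzim (by rw [hznorm]; linarith)]
      congr 1
      rw [hUdef, ← tsum_mul_right]
      exact tsum_congr fun j => by rw [pow_succ]; ring
    have hm'z : m' z = -(V * w) := by
      rw [hm'r z hzim (by rw [hznorm]; linarith)]
      congr 1
      rw [hVdef, ← tsum_mul_right]
      exact tsum_congr fun j => by rw [pow_succ]; ring
    have hU : U = (μ 0 : ℂ) + S1 * w := by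
      rw [hUdef, Summable.tsum_eq_zero_add hsum_μ]
      simp only [pow_zero, mul_one]
      congr 1
      rw [hS1def, ← tsum_mul_right]
      exact tsum_congr fun i => by rw [pow_succ]; ring
    have hS1 : S1 = (μ 1 : ℂ) + S2 * w := by
      rw [hS1def, Summable.tsum_eq_zero_add hsum_μ1]
      simp only [pow_zero, mul_one]
      congr 1
      rw [hS2def, ← tsum_mul_right]
      exact tsum_congr fun i => by rw [pow_succ]; ring
    have hUV : U * V = QW := by
      have hnμ : Summable fun i => ‖(μ i : ℂ) * w ^ i‖ := by
        refine Summable.of_nonneg_of_le (fun i => norm_nonneg _) (fun i => ?_)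
          ((summable_geometric_of_lt_one (r := r0 / y) (by positivity)
            (by rw [div_lt_one hy0]; exact hyr0)).mul_left 1)
        rw [norm_mul, norm_pow, Complex.norm_real, Real.norm_eq_abs, hwdef, hzdef, normIy y hy0]
        calc |μ i| * (y⁻¹) ^ i ≤ r0 ^ i * (y⁻¹) ^ i :=
              mul_le_mul_of_nonneg_right ((hμb i).trans (pow_le_pow_left₀ ht hr0t i))
                (by positivity)
          _ = 1 * (r0 / y) ^ i := by rw [div_eq_mul_inv, mul_pow]; ring
      have hnν : Summable fun i => ‖(ν i : ℂ) * w ^ i‖ := by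
        refine Summable.of_nonneg_of_le (fun i => norm_nonneg _) (fun i => ?_)
          ((summable_geometric_of_lt_one (r := r0 / y) (by positivity)
            (by rw [div_lt_one hy0]; exact hyr0)).mul_left 1)
        rw [norm_mul, norm_pow, Complex.norm_real, Real.norm_eq_abs, hwdef, hzdef, normIy y hy0]
        calc |ν i| * (y⁻¹) ^ i ≤ r0 ^ i * (y⁻¹) ^ i :=
              mul_le_mul_of_nonneg_right ((hνb i).trans (pow_le_pow_left₀ hs hr0s i))
                (by positivity)
          _ = 1 * (r0 / y) ^ i := by rw [div_eq_mul_inv, mul_pow]; ring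
      rw [hUdef, hVdef, tsum_mul_tsum_eq_tsum_sum_antidiagonal_of_summable_norm hnμ hnν, hQWdef]
      refine tsum_congr fun N => ?_
      calc (∑ kl ∈ Finset.HasAntidiagonal.antidiagonal N, ((μ kl.1 : ℂ) * w ^ kl.1) * ((ν kl.2 : ℂ) * w ^ kl.2))
          = ∑ kl ∈ Finset.HasAntidiagonal.antidiagonal N, ((μ kl.1 * ν kl.2 : ℝ) : ℂ) * w ^ N := by
            refine Finset.sum_congr rfl fun kl hkl => ?_
            rw [Finset.HasAntidiagonal.mem_antidiagonal] at hkl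
            rw [← hkl, pow_add]
            push_cast
            ring
        _ = ((qSeq μ ν N : ℝ) : ℂ) * w ^ N := by
            rw [← Finset.sum_mul, qSeq]
            push_cast
            ring
    have hsplit : (∑' N, ((crSeq A B μ ν (N + 2) : ℝ) : ℂ) * w ^ (N + 2))
        = (S2 - (B : ℂ) * S1 - (A : ℂ) ^ 2 * QW) * w ^ 2 := by
      have h1 : ∀ N : ℕ, ((crSeq A B μ ν (N + 2) : ℝ) : ℂ) * w ^ (N + 2)
          = ((μ (N + 2) : ℂ) * w ^ N - (B : ℂ) * ((μ (N + 1) : ℂ) * w ^ N)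
            - (A : ℂ) ^ 2 * ((qSeq μ ν N : ℂ) * w ^ N)) * w ^ 2 := by
        intro N
        show (((μ (N + 2) - B * μ (N + 1) - A ^ 2 * qSeq μ ν N : ℝ)) : ℂ) * w ^ (N + 2) = _
        push_cast
        ring
      rw [tsum_congr h1, tsum_mul_right]
      congr 1
      rw [Summable.tsum_sub (hsum_μ2.sub (hsum_μ1.mul_left _)) (hsum_q.mul_left _),
        Summable.tsum_sub hsum_μ2 (hsum_μ1.mul_left _), tsum_mul_left, tsum_mul_left]
    -- the functional equation
    have hrelz := hrel z hzim
    rw [hmz, hm'z] at hrelz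
    have hEQ : U - (B : ℂ) * U * w - (A : ℂ) ^ 2 * U * V * w ^ 2 = 1 := by
      linear_combination hrelz - (U : ℂ) * hwz
    -- assemble
    calc ∑' N, ((crSeq A B μ ν N : ℝ) : ℂ) * w ^ N
        = ((crSeq A B μ ν 0 : ℝ) : ℂ) * w ^ 0
          + ∑' N, ((crSeq A B μ ν (N + 1) : ℝ) : ℂ) * w ^ (N + 1) := by
          rw [Summable.tsum_eq_zero_add hsum_cre]
      _ = ((crSeq A B μ ν 0 : ℝ) : ℂ) * w ^ 0
          + (((crSeq A B μ ν 1 : ℝ) : ℂ) * w ^ 1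
            + ∑' N, ((crSeq A B μ ν (N + 2) : ℝ) : ℂ) * w ^ (N + 2)) := by
          rw [Summable.tsum_eq_zero_add ((summable_nat_add_iff 1).mpr hsum_cre)]
      _ = (((μ 0 : ℂ) - 1))
          + ((((μ 1 : ℂ) - (B : ℂ) * (μ 0 : ℂ))) * w
            + (S2 - (B : ℂ) * S1 - (A : ℂ) ^ 2 * QW) * w ^ 2) := by
          rw [hsplit]
          norm_num [crSeq]
      _ = 0 := by linear_combination hEQ + (-1 + (B : ℂ) * w) * hU + (-w) * hS1
            + ((A : ℂ) ^ 2 * w ^ 2) * hUV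
  -- extract coefficients
  have hext : ∀ N, crSeq A B μ ν N = 0 := by
    intro N
    have h := coeff_extract N (fun i => ((crSeq A B μ ν i : ℝ) : ℂ)) C (2 * r0) (2 * r0)
      (by positivity) (by positivity) hbound hz
    have h2 : ((crSeq A B μ ν N : ℝ) : ℂ) = 0 := h
    exact_mod_cast h2
  constructor
  · have h := hext 1
    have : μ 1 - B * μ 0 = 0 := h
    linarith
  · intro N
    have h := hext (N + 2)
    have : μ (N + 2) - B * μ (N + 1) - A ^ 2 * qSeq μ ν N = 0 := h
    rw [qSeq] at this
    linarith



/-- the single-step transfer matrix -/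
def tmat (a b : ℕ → ℝ) (j : ℕ) : Matrix (Fin 2) (Fin 2) (Polynomial ℝ) :=
  !![0, 1; -Polynomial.C (a j ^ 2), Polynomial.C (b j) - Polynomial.X]

/-- product of transfer matrices for indices `s+1, …, s+n` -/
def TMat (a b : ℕ → ℝ) (s : ℕ) : ℕ → Matrix (Fin 2) (Fin 2) (Polynomial ℝ)
  | 0 => 1
  | (n + 1) => TMat a b s n * tmat a b (s + n + 1)

lemma TMat_succ_00 (a b : ℕ → ℝ) (s n : ℕ) :
    TMat a b s (n + 1) 0 0 = TMat a b s n 0 1 * (-Polynomial.C (a (s + n + 1) ^ 2)) := by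
  show (TMat a b s n * tmat a b (s + n + 1)) 0 0 = _
  rw [Matrix.mul_apply, Fin.sum_univ_two]
  simp [tmat]

lemma TMat_succ_01 (a b : ℕ → ℝ) (s n : ℕ) :
    TMat a b s (n + 1) 0 1
      = TMat a b s n 0 0 + TMat a b s n 0 1 * (Polynomial.C (b (s + n + 1)) - Polynomial.X) := by
  show (TMat a b s n * tmat a b (s + n + 1)) 0 1 = _
  rw [Matrix.mul_apply, Fin.sum_univ_two]
  simp [tmat]

lemma TMat_succ_10 (a b : ℕ → ℝ) (s n : ℕ) :
    TMat a b s (n + 1) 1 0 = TMat a b s n 1 1 * (-Polynomial.C (a (s + n + 1) ^ 2)) := by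
  show (TMat a b s n * tmat a b (s + n + 1)) 1 0 = _
  rw [Matrix.mul_apply, Fin.sum_univ_two]
  simp [tmat]

lemma TMat_succ_11 (a b : ℕ → ℝ) (s n : ℕ) :
    TMat a b s (n + 1) 1 1
      = TMat a b s n 1 0 + TMat a b s n 1 1 * (Polynomial.C (b (s + n + 1)) - Polynomial.X) := by
  show (TMat a b s n * tmat a b (s + n + 1)) 1 1 = _
  rw [Matrix.mul_apply, Fin.sum_univ_two]
  simp [tmat]

lemma TMat_zero (a b : ℕ → ℝ) (s : ℕ) :
    TMat a b s 0 0 0 = 1 ∧ TMat a b s 0 0 1 = 0 ∧ TMat a b s 0 1 0 = 0 ∧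
      TMat a b s 0 1 1 = 1 := by
  refine ⟨?_, ?_, ?_, ?_⟩ <;> simp [TMat, Matrix.one_apply]


/-- the fundamental Möbius relation between strips of the continued fraction -/
lemma TMat_rel (a b : ℕ → ℝ) (ms : ℕ → ℂ → ℂ)
    (hpos : ∀ n (z : ℂ), 0 < z.im → 0 < (ms n z).im)
    (hrec : ∀ n (z : ℂ), 0 < z.im →
      ms n z = ((b (n + 1) : ℂ) - z - (a (n + 1) : ℂ) ^ 2 * ms (n + 1) z)⁻¹)
    (s : ℕ) : ∀ n (z : ℂ), 0 < z.im →
    ms s z * (aeval z (TMat a b s n 1 0) * ms (s + n) z + aeval z (TMat a b s n 1 1))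
      = aeval z (TMat a b s n 0 0) * ms (s + n) z + aeval z (TMat a b s n 0 1) := by
  intro n
  induction n with
  | zero =>
    intro z hz
    obtain ⟨h1, h2, h3, h4⟩ := TMat_zero a b s
    rw [h1, h2, h3, h4]
    simp
  | succ n ih =>
    intro z hz
    have hmne : ms (s + n) z ≠ 0 := by
      intro h
      have := hpos (s + n) z hz
      rw [h] at this
      simp at this
    have hm := hrec (s + n) z hz
    have hdne : ((b (s + n + 1) : ℂ) - z - (a (s + n + 1) : ℂ) ^ 2 * ms (s + n + 1) z) ≠ 0 := by
      intro h
      rw [h] at hm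
      simp at hm
      exact hmne hm
    have hprod : ms (s + n) z *
        ((b (s + n + 1) : ℂ) - z - (a (s + n + 1) : ℂ) ^ 2 * ms (s + n + 1) z) = 1 := by
      rw [hm]
      exact inv_mul_cancel₀ hdne
    have ihz := ih z hz
    rw [TMat_succ_00, TMat_succ_01, TMat_succ_10, TMat_succ_11]
    simp only [map_add, map_mul, map_sub, map_neg, aeval_C, aeval_X]
    set P := aeval z (TMat a b s n 0 0)
    set Q := aeval z (TMat a b s n 0 1)
    set R := aeval z (TMat a b s n 1 0)
    set S := aeval z (TMat a b s n 1 1)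
    set m := ms (s + n) z
    set m' := ms (s + n + 1) z
    set A2 : ℂ := algebraMap ℝ ℂ (a (s + n + 1) ^ 2) with hA2
    set Bc : ℂ := algebraMap ℝ ℂ (b (s + n + 1)) with hBc
    have hA2' : A2 = ((a (s + n + 1) : ℝ) : ℂ) ^ 2 := by
      rw [hA2]
      push_cast [Complex.coe_algebraMap]
      ring
    have hBc' : Bc = ((b (s + n + 1) : ℝ) : ℂ) := by
      rw [hBc, Complex.coe_algebraMap]
    have hprod' : m * (Bc - z - A2 * m') = 1 := by
      rw [hA2', hBc']
      show m * (((b (s + n + 1) : ℝ) : ℂ) - z - ((a (s + n + 1) : ℝ) : ℂ) ^ 2 * m') = 1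
      convert hprod using 2
    have hsn : s + (n + 1) = s + n + 1 := by omega
    rw [hsn]
    apply mul_left_cancel₀ hmne
    -- goal: m * (ms s z * (S * (-A2) * m' + (R + S * (Bc - z)))) = m * ((Q * (-A2)) * m' + (P + Q * (Bc - z)))
    linear_combination ihz + (ms s z * S - Q) * hprod'


lemma CX_deg (c : ℝ) : (Polynomial.C c - Polynomial.X).degree = 1 ∧
    (Polynomial.C c - Polynomial.X).leadingCoeff = -1 := by
  have h : Polynomial.C c - Polynomial.X = -(Polynomial.X - Polynomial.C c) := by ring
  constructor
  · rw [h, degree_neg, degree_X_sub_C]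
  · rw [h, leadingCoeff_neg, (monic_X_sub_C c).leadingCoeff]

lemma TMat_deg (a b : ℕ → ℝ) (s : ℕ) : ∀ n, 1 ≤ n →
    (TMat a b s n 1 1).degree = (n : WithBot ℕ) ∧
    (TMat a b s n 1 1).leadingCoeff = (-1) ^ n ∧
    (TMat a b s n 1 0).degree < (n : WithBot ℕ) ∧
    (TMat a b s n 0 1).degree < (n : WithBot ℕ) ∧
    (TMat a b s n 0 0).degree < (n : WithBot ℕ) := by
  intro n
  induction n with
  | zero => omega
  | succ n ih =>
    intro _
    obtain ⟨h1, h2, h3, h4⟩ := TMat_zero a b s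
    rcases Nat.eq_zero_or_pos n with hn0 | hn1
    · subst hn0
      rw [TMat_succ_00, TMat_succ_01, TMat_succ_10, TMat_succ_11, h1, h2, h3, h4]
      refine ⟨?_, ?_, ?_, ?_, ?_⟩
      · rw [zero_add, one_mul, (CX_deg (b (s + 0 + 1))).1]
        norm_num
      · rw [zero_add, one_mul, (CX_deg (b (s + 0 + 1))).2]
        norm_num
      · rw [one_mul, degree_neg]
        refine lt_of_le_of_lt (degree_C_le) ?_
        exact_mod_cast zero_lt_one
      · rw [zero_mul, add_zero, degree_one]
        exact_mod_cast zero_lt_one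
      · rw [zero_mul, degree_zero]
        exact bot_lt_iff_ne_bot.mpr (by simp)
    · obtain ⟨hdeg, hlc, hlt10, hlt01, hlt00⟩ := ih hn1
      have hcast : ((n + 1 : ℕ) : WithBot ℕ) = (n : WithBot ℕ) + 1 := by
        push_cast
        ring
      have hnle : (n : WithBot ℕ) < ((n + 1 : ℕ) : WithBot ℕ) := by
        exact_mod_cast Nat.lt_succ_self n
      have hCX := CX_deg (b (s + n + 1))
      have hmul_deg : (TMat a b s n 1 1 * (Polynomial.C (b (s + n + 1)) - Polynomial.X)).degree
          = ((n + 1 : ℕ) : WithBot ℕ) := by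
        rw [degree_mul, hdeg, hCX.1, hcast]
      have hlt10' : (TMat a b s n 1 0).degree
          < (TMat a b s n 1 1 * (Polynomial.C (b (s + n + 1)) - Polynomial.X)).degree := by
        rw [hmul_deg]
        exact lt_trans hlt10 hnle
      refine ⟨?_, ?_, ?_, ?_, ?_⟩
      · rw [TMat_succ_11, degree_add_eq_right_of_degree_lt hlt10', hmul_deg]
      · rw [TMat_succ_11, leadingCoeff_add_of_degree_lt hlt10', leadingCoeff_mul, hlc, hCX.2]
        ring
      · rw [TMat_succ_10]
        calc (TMat a b s n 1 1 * -Polynomial.C (a (s + n + 1) ^ 2)).degree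
            ≤ (TMat a b s n 1 1).degree + (-Polynomial.C (a (s + n + 1) ^ 2)).degree :=
              degree_mul_le _ _
          _ ≤ (n : WithBot ℕ) + 0 :=
              add_le_add (le_of_eq hdeg) (by rw [degree_neg]; exact degree_C_le)
          _ = (n : WithBot ℕ) := add_zero _
          _ < _ := hnle
      · rw [TMat_succ_01]
        refine lt_of_le_of_lt (degree_add_le _ _) (max_lt ?_ ?_)
        · exact lt_trans hlt00 hnle
        · refine lt_of_le_of_lt (degree_mul_le _ _) ?_
          rw [hCX.1, hcast]
          exact WithBot.add_lt_add_right (by simp) hlt01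
      · rw [TMat_succ_00]
        calc (TMat a b s n 0 1 * -Polynomial.C (a (s + n + 1) ^ 2)).degree
            ≤ (TMat a b s n 0 1).degree + (-Polynomial.C (a (s + n + 1) ^ 2)).degree :=
              degree_mul_le _ _
          _ ≤ (TMat a b s n 0 1).degree + 0 :=
              add_le_add le_rfl (by rw [degree_neg]; exact degree_C_le)
          _ = (TMat a b s n 0 1).degree := add_zero _
          _ < _ := lt_trans hlt01 hnle

lemma TMat_11_ne (a b : ℕ → ℝ) (s : ℕ) : ∀ n, TMat a b s n 1 1 ≠ 0 := by
  intro n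
  rcases Nat.eq_zero_or_pos n with hn0 | hn1
  · subst hn0
    rw [(TMat_zero a b s).2.2.2]
    exact one_ne_zero
  · have := (TMat_deg a b s n hn1).1
    intro h
    rw [h, degree_zero] at this
    exact (by simp : ((⊥ : WithBot ℕ) ≠ (n : WithBot ℕ))) this

lemma TMat_10_ne (a b : ℕ → ℝ) (ha : ∀ j, 1 ≤ j → a j ≠ 0) (s : ℕ) :
    ∀ n, 1 ≤ n → TMat a b s n 1 0 ≠ 0 := by
  intro n hn
  obtain ⟨m, rfl⟩ : ∃ m, n = m + 1 := ⟨n - 1, by omega⟩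
  rw [TMat_succ_10]
  refine mul_ne_zero (TMat_11_ne a b s m) ?_
  rw [neg_ne_zero]
  exact_mod_cast Polynomial.C_ne_zero.mpr (pow_ne_zero 2 (ha (s + m + 1) (by omega)))

lemma TMat_det (a b : ℕ → ℝ) (s : ℕ) : ∀ n,
    TMat a b s n 0 0 * TMat a b s n 1 1 - TMat a b s n 0 1 * TMat a b s n 1 0
      = Polynomial.C (∏ j ∈ Finset.range n, a (s + j + 1) ^ 2) := by
  intro n
  induction n with
  | zero =>
    obtain ⟨h1, h2, h3, h4⟩ := TMat_zero a b s
    rw [h1, h2, h3, h4, Finset.prod_range_zero, map_one]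
    ring
  | succ n ih =>
    rw [TMat_succ_00, TMat_succ_01, TMat_succ_10, TMat_succ_11, Finset.prod_range_succ, map_mul]
    linear_combination (Polynomial.C (a (s + n + 1) ^ 2)) * ih

lemma alpha_ne_zero (a b : ℕ → ℝ) (ha : ∀ j, 1 ≤ j → a j ≠ 0) (n1 p : ℕ)
    (hn1 : 1 ≤ n1) (hp : 1 ≤ p) :
    TMat a b n1 p 1 0 * (TMat a b 0 n1 1 1) ^ 2
      - (TMat a b n1 p 1 1 - TMat a b n1 p 0 0) * (TMat a b 0 n1 1 0) * (TMat a b 0 n1 1 1)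
      - TMat a b n1 p 0 1 * (TMat a b 0 n1 1 0) ^ 2 ≠ 0 := by
  intro hα
  set e := TMat a b n1 p 0 0 with hedef
  set f := TMat a b n1 p 0 1 with hfdef
  set g := TMat a b n1 p 1 0 with hgdef
  set h := TMat a b n1 p 1 1 with hhdef
  set C1 := TMat a b 0 n1 1 0 with hC1def
  set D1 := TMat a b 0 n1 1 1 with hD1def
  obtain ⟨hdeg, hlead, hlt10, hlt01, hlt00⟩ := TMat_deg a b n1 p hp
  have hC1ne : C1 ≠ 0 := TMat_10_ne a b ha 0 n1 hn1
  set E := 2 * g * D1 - (h - e) * C1 with hEdef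
  set Δ := (h - e) ^ 2 + 4 * f * g with hΔdef
  have hE2 : E ^ 2 = Δ * C1 ^ 2 := by
    rw [hEdef, hΔdef]
    linear_combination (4 * g) * hα
  have hdvd : C1 ^ 2 ∣ E ^ 2 := ⟨Δ, by linear_combination hE2⟩
  have hdvd1 : C1 ∣ E := (IsIntegrallyClosed.pow_dvd_pow_iff (by norm_num : (2:ℕ) ≠ 0)).mp hdvd
  obtain ⟨E1, hE1⟩ := hdvd1
  have hΔE : Δ = E1 ^ 2 := by
    have h2 := hE2
    rw [hE1] at h2
    exact (mul_left_cancel₀ (pow_ne_zero 2 hC1ne) (by linear_combination h2)).symm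
  set T := e + h with hTdef
  have hdet := TMat_det a b n1 p
  set d := ∏ j ∈ Finset.range p, a (n1 + j + 1) ^ 2 with hddef
  have hdne : d ≠ 0 := by
    rw [hddef]
    exact Finset.prod_ne_zero_iff.2 fun j hj => pow_ne_zero 2 (ha (n1 + j + 1) (by omega))
  have hC4 : Polynomial.C (4 * d) = 4 * Polynomial.C d := by
    rw [map_mul, map_ofNat]
  have hfact : (T - E1) * (T + E1) = Polynomial.C (4 * d) := by
    rw [hC4, hTdef]
    linear_combination hΔE + 4 * hdet
  have hCne : Polynomial.C (4 * d) ≠ 0 :=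
    Polynomial.C_ne_zero.mpr (mul_ne_zero (by norm_num) hdne)
  have hprodne : (T - E1) * (T + E1) ≠ 0 := by rw [hfact]; exact hCne
  have hne1 : T - E1 ≠ 0 := fun hh => hprodne (by rw [hh, zero_mul])
  have hne2 : T + E1 ≠ 0 := fun hh => hprodne (by rw [hh, mul_zero])
  have hnat : (T - E1).natDegree + (T + E1).natDegree = 0 := by
    rw [← Polynomial.natDegree_mul hne1 hne2, hfact, Polynomial.natDegree_C]
  have hnat1 : (T - E1).natDegree = 0 := by omega
  have hnat2 : (T + E1).natDegree = 0 := by omega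
  -- T has degree p ≥ 1
  have hTdeg : T.degree = (p : WithBot ℕ) := by
    rw [hTdef, degree_add_eq_right_of_degree_lt (by rw [hdeg]; exact hlt00), hdeg]
  have hTcoeff : T.coeff p ≠ 0 := Polynomial.coeff_ne_zero_of_eq_degree hTdeg
  have h2T : T + T = (T - E1) + (T + E1) := by ring
  have hcf : T.coeff p + T.coeff p = (T - E1).coeff p + (T + E1).coeff p := by
    rw [← Polynomial.coeff_add, ← Polynomial.coeff_add, h2T]
  have hz1 : (T - E1).coeff p = 0 :=
    Polynomial.coeff_eq_zero_of_natDegree_lt (by rw [hnat1]; omega)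
  have hz2 : (T + E1).coeff p = 0 :=
    Polynomial.coeff_eq_zero_of_natDegree_lt (by rw [hnat2]; omega)
  rw [hz1, hz2] at hcf
  have : T.coeff p = 0 := by linarith
  exact hTcoeff this



lemma mfun_differentiableOn {m : ℂ → ℂ} (hm : IsDiscreteMFunction m) :
    DifferentiableOn ℂ m {z : ℂ | 0 < z.im} := by
  obtain ⟨ρ, hρ, ⟨t, ht⟩, hrep⟩ := hm
  intro z₀ hz₀
  simp only [Set.mem_setOf_eq] at hz₀
  set ε : ℝ := z₀.im / 2 with hε
  have hεpos : 0 < ε := by positivity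
  have him : ∀ z ∈ ball z₀ ε, ε < z.im := by
    intro z hz
    rw [mem_ball, Complex.dist_eq] at hz
    have h1 : |(z - z₀).im| ≤ ‖z - z₀‖ := Complex.abs_im_le_norm _
    have h2 : z₀.im - z.im ≤ |(z - z₀).im| := by
      rw [Complex.sub_im]
      rw [abs_sub_comm]
      exact le_abs_self _
    have : z₀.im - z.im < ε := by
      calc z₀.im - z.im ≤ |(z - z₀).im| := h2
        _ ≤ ‖z - z₀‖ := h1
        _ < ε := hz
    rw [hε] at *
    linarith
  have hmeas : ∀ z ∈ ball z₀ ε, AEStronglyMeasurable (fun x : ℝ => ((x : ℂ) - z)⁻¹) ρ := by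
    intro z hz
    have himz : 0 < z.im := lt_trans hεpos (him z hz)
    refine Continuous.aestronglyMeasurable (Continuous.inv₀ (by continuity) ?_)
    exact fun x => sub_ne_zero_of_im x z himz
  have key := hasDerivAt_integral_of_dominated_loc_of_deriv_le (μ := ρ)
    (F := fun z (x : ℝ) => ((x : ℂ) - z)⁻¹)
    (F' := fun z (x : ℝ) => (((x : ℂ) - z) ^ 2)⁻¹)
    (x₀ := z₀) (bound := fun _ => (ε ^ 2)⁻¹) (ball_mem_nhds z₀ hεpos)
    (Eventually.mono (ball_mem_nhds z₀ hεpos) hmeas)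
    ?_ ?_ ?_ ?_ ?_
  · have hd : HasDerivAt (fun z => ∫ x : ℝ, ((x : ℂ) - z)⁻¹ ∂ρ)
        (∫ x : ℝ, (((x : ℂ) - z₀) ^ 2)⁻¹ ∂ρ) z₀ := key.2
    have hev : m =ᶠ[nhds z₀] (fun z => ∫ x : ℝ, ((x : ℂ) - z)⁻¹ ∂ρ) := by
      refine eventually_of_mem (ball_mem_nhds z₀ hεpos) fun z hz => ?_
      exact hrep z (lt_trans hεpos (him z hz))
    exact ((hd.congr_of_eventuallyEq hev).differentiableAt).differentiableWithinAt
  · -- Integrable (F z₀)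
    refine Integrable.mono' (integrable_const (ε⁻¹)) (hmeas z₀ (mem_ball_self hεpos)) ?_
    refine Eventually.of_forall fun x => ?_
    rw [norm_inv]
    refine inv_anti₀ hεpos ?_
    calc ε ≤ z₀.im := by rw [hε]; linarith
      _ ≤ ‖(x : ℂ) - z₀‖ := im_le_norm_sub x z₀
  · -- AESM F' z₀
    refine Continuous.aestronglyMeasurable (Continuous.inv₀ (by continuity) ?_)
    exact fun x => pow_ne_zero 2 (sub_ne_zero_of_im x z₀ hz₀)
  · -- bound
    refine Eventually.of_forall fun x => fun z hz => ?_
    have himz : ε < z.im := him z hz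
    have h1 : ε ≤ ‖(x : ℂ) - z‖ := le_trans (le_of_lt himz) (im_le_norm_sub x z)
    rw [norm_inv, norm_pow]
    rw [inv_le_inv₀ (pow_pos (lt_of_lt_of_le hεpos h1) 2) (by positivity)]
    exact pow_le_pow_left₀ hεpos.le h1 2
  · exact integrable_const _
  · -- HasDerivAt
    refine Eventually.of_forall fun x => fun z hz => ?_
    have himz : 0 < z.im := lt_trans hεpos (him z hz)
    have hne : (x : ℂ) - z ≠ 0 := sub_ne_zero_of_im x z himz
    have h1 : HasDerivAt (fun z : ℂ => (x : ℂ) - z) (-1) z := by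
      exact (hasDerivAt_id' z).const_sub (x : ℂ)
    have h2 : HasDerivAt (fun z : ℂ => ((x : ℂ) - z)⁻¹) (- -1 / ((x : ℂ) - z) ^ 2) z := h1.inv hne
    have h3 : (((x : ℂ) - z) ^ 2)⁻¹ = - -1 / ((x : ℂ) - z) ^ 2 := by
      rw [div_eq_mul_inv]
      ring
    rw [h3]
    exact h2

lemma vanish_on_upper (F : ℂ → ℂ) (hF : DifferentiableOn ℂ F {z : ℂ | 0 < z.im}) (R : ℝ)
    (hR : 0 ≤ R) (h0 : ∀ z : ℂ, 0 < z.im → R < ‖z‖ → F z = 0) :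
    ∀ z : ℂ, 0 < z.im → F z = 0 := by
  have hopen : IsOpen {z : ℂ | 0 < z.im} := isOpen_lt continuous_const Complex.continuous_im
  have han := hF.analyticOnNhd hopen
  have hpre : IsPreconnected {z : ℂ | 0 < z.im} := (convex_halfSpace_im_gt 0).isPreconnected
  set z₀ : ℂ := Complex.I * ((R + 1 : ℝ) : ℂ) with hz₀def
  have hz₀im : 0 < z₀.im := by
    rw [hz₀def]
    simp only [Complex.mul_im, Complex.I_re, Complex.I_im, Complex.ofReal_re,
      Complex.ofReal_im, zero_mul, one_mul, zero_add]
    linarith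
  have hz₀norm : R < ‖z₀‖ := by
    rw [hz₀def, norm_mul, Complex.norm_I, one_mul, Complex.norm_real, Real.norm_eq_abs,
      abs_of_pos (by linarith)]
    linarith
  have hV : IsOpen {z : ℂ | 0 < z.im ∧ R < ‖z‖} := by
    refine IsOpen.inter hopen ?_
    exact isOpen_lt continuous_const continuous_norm
  have hEv : F =ᶠ[nhds z₀] 0 := by
    refine eventually_of_mem (hV.mem_nhds ⟨hz₀im, hz₀norm⟩) fun z hz => ?_
    exact h0 z hz.1 hz.2
  intro z hz
  exact AnalyticOnNhd.eqOn_zero_of_preconnected_of_eventuallyEq_zero han hpre hz₀im hEv hz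


end QIaux

/-- A discrete m-function with eventually periodic continued fraction coefficients is a
quadratic irrationality: `α(z)M(z)² + β(z)M(z) + γ(z) = 0` on `ℂ₊` for some real
polynomials `α, β, γ` with `α ≠ 0`. -/
theorem quadratic_irrationality
    (M : ℂ → ℂ) (a b : ℕ → ℝ) (ms : ℕ → ℂ → ℂ) (k p : ℕ) (hp : 1 ≤ p)
    (hapos : ∀ n, 1 ≤ n → 0 < a n)
    (haper : ∀ n, k < n → a (n + p) = a n)
    (hbper : ∀ n, k < n → b (n + p) = b n)
    (hM : IsDiscreteMFunction M)
    (hcoef : HasJacobiCoeffs M a b ms) :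
    ∃ α β γ : Polynomial ℝ, α ≠ 0 ∧
      ∀ z : ℂ, 0 < z.im →
        aeval z α * M z ^ 2 + aeval z β * M z + aeval z γ = 0 := by
  classical
  obtain ⟨hms0, hmsdm, hmsrec⟩ := hcoef
  have hpos : ∀ n (z : ℂ), 0 < z.im → 0 < (ms n z).im :=
    fun n z hz => QIaux.mfun_im_pos (hmsdm n) z hz
  have hprod : ∀ n (z : ℂ), 0 < z.im →
      ms n z * ((b (n + 1) : ℂ) - z - (a (n + 1) : ℂ) ^ 2 * ms (n + 1) z) = 1 := by
    intro n z hz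
    have hmne : ms n z ≠ 0 := by
      intro h
      have := hpos n z hz
      rw [h] at this
      simp at this
    have hm := hmsrec n z hz
    have hdne : ((b (n + 1) : ℂ) - z - (a (n + 1) : ℂ) ^ 2 * ms (n + 1) z) ≠ 0 := by
      intro h
      rw [h] at hm
      simp at hm
      exact hmne hm
    rw [hm]
    exact inv_mul_cancel₀ hdne
  choose tt μμ htt0 hμμ0 hμμb hμμrep using fun n => QIaux.exists_moments (hmsdm n)
  have hrec : ∀ n, μμ n 1 = b (n + 1) * μμ n 0 ∧
      ∀ N, μμ n (N + 2) = b (n + 1) * μμ n (N + 1) +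
        (a (n + 1)) ^ 2 * ∑ ij ∈ Finset.HasAntidiagonal.antidiagonal N, μμ n ij.1 * μμ (n + 1) ij.2 :=
    fun n => QIaux.moment_rec (a (n + 1)) (b (n + 1)) (μμ n) (μμ (n + 1)) (tt n) (tt (n + 1))
      (htt0 n) (htt0 (n + 1)) (hμμb n) (hμμb (n + 1)) (ms n) (ms (n + 1))
      (hμμrep n) (hμμrep (n + 1)) (fun z hz => hprod n z hz)
  have hper : ∀ N n, k < n → μμ n N = μμ (n + p) N := by
    intro N
    induction N using Nat.strong_induction_on with
    | _ N ih =>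
      intro n hn
      match N with
      | 0 => rw [hμμ0 n, hμμ0 (n + p)]
      | 1 =>
        have hb1 : b (n + p + 1) = b (n + 1) := by
          have h := hbper (n + 1) (by omega)
          rw [show n + p + 1 = n + 1 + p by omega]
          exact h
        rw [(hrec n).1, (hrec (n + p)).1, hμμ0 n, hμμ0 (n + p), hb1]
      | (N + 2) =>
        have hb1 : b (n + p + 1) = b (n + 1) := by
          have h := hbper (n + 1) (by omega)
          rw [show n + p + 1 = n + 1 + p by omega]
          exact h
        have ha1 : a (n + p + 1) = a (n + 1) := by
          have h := haper (n + 1) (by omega)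
          rw [show n + p + 1 = n + 1 + p by omega]
          exact h
        rw [(hrec n).2 N, (hrec (n + p)).2 N, hb1, ha1, ih (N + 1) (by omega) n hn]
        congr 1
        congr 1
        refine Finset.sum_congr rfl fun ij hij => ?_
        rw [Finset.HasAntidiagonal.mem_antidiagonal] at hij
        have e2 : μμ (n + 1) ij.2 = μμ (n + p + 1) ij.2 := by
          have h := ih ij.2 (by omega) (n + 1) (by omega)
          rwa [show n + 1 + p = n + p + 1 by omega] at h
        rw [ih ij.1 (by omega) n hn, e2]
  set n1 := k + 1 with hn1def
  set R₀ : ℝ := max (tt n1) (tt (n1 + p)) with hR₀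
  have hR₀0 : 0 ≤ R₀ := le_trans (htt0 n1) (le_max_left _ _)
  have hms_eq : ∀ z : ℂ, 0 < z.im → R₀ < ‖z‖ → ms n1 z = ms (n1 + p) z := by
    intro z hz hn
    rw [hμμrep n1 z hz ((le_max_left _ _).trans_lt hn),
      hμμrep (n1 + p) z hz ((le_max_right _ _).trans_lt hn)]
    congr 1
    exact tsum_congr fun j => by rw [hper j n1 (by omega)]
  set Pp := QIaux.TMat a b 0 n1 0 0 with hPp
  set Qp := QIaux.TMat a b 0 n1 0 1 with hQp
  set C1p := QIaux.TMat a b 0 n1 1 0 with hC1p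
  set D1p := QIaux.TMat a b 0 n1 1 1 with hD1p
  set ep := QIaux.TMat a b n1 p 0 0 with hep
  set fp := QIaux.TMat a b n1 p 0 1 with hfp
  set gp := QIaux.TMat a b n1 p 1 0 with hgp
  set hp' := QIaux.TMat a b n1 p 1 1 with hhp
  refine ⟨gp * D1p ^ 2 - (hp' - ep) * C1p * D1p - fp * C1p ^ 2,
    -(2 * gp * Qp * D1p) + (hp' - ep) * (Pp * D1p + Qp * C1p) + 2 * fp * Pp * C1p,
    gp * Qp ^ 2 - (hp' - ep) * Pp * Qp - fp * Pp ^ 2, ?_, ?_⟩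
  · exact QIaux.alpha_ne_zero a b (fun j hj => (hapos j hj).ne') n1 p (by omega) hp
  · set F : ℂ → ℂ := fun z =>
      aeval z (gp * D1p ^ 2 - (hp' - ep) * C1p * D1p - fp * C1p ^ 2) * M z ^ 2
        + aeval z (-(2 * gp * Qp * D1p) + (hp' - ep) * (Pp * D1p + Qp * C1p)
            + 2 * fp * Pp * C1p) * M z
        + aeval z (gp * Qp ^ 2 - (hp' - ep) * Pp * Qp - fp * Pp ^ 2) with hFdef
    have haev : ∀ q : Polynomial ℝ, Differentiable ℂ (fun z : ℂ => (aeval z q : ℂ)) := by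
      intro q
      have hq : (fun z : ℂ => (aeval z q : ℂ)) = fun z => (q.map (algebraMap ℝ ℂ)).eval z := by
        funext z
        rw [aeval_def, eval_map]
      rw [hq]
      exact (q.map (algebraMap ℝ ℂ)).differentiable
    have hMd := QIaux.mfun_differentiableOn hM
    have hFd : DifferentiableOn ℂ F {z : ℂ | 0 < z.im} := by
      rw [hFdef]
      exact (((haev _).differentiableOn.mul (hMd.pow 2)).add
        ((haev _).differentiableOn.mul hMd)).add (haev _).differentiableOn
    have hF0 : ∀ z : ℂ, 0 < z.im → R₀ < ‖z‖ → F z = 0 := by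
      intro z hz hnorm
      have h1 := QIaux.TMat_rel a b ms hpos hmsrec 0 n1 z hz
      simp only [Nat.zero_add] at h1
      rw [hms0] at h1
      have h2 := QIaux.TMat_rel a b ms hpos hmsrec n1 p z hz
      rw [← hms_eq z hz hnorm] at h2
      rw [hFdef]
      simp only [map_add, map_sub, map_mul, map_pow, map_neg, map_ofNat]
      have hsub : aeval z Qp - aeval z D1p * M z
          = ms n1 z * (aeval z C1p * M z - aeval z Pp) := by
        linear_combination -h1
      have hquad : aeval z gp * ms n1 z ^ 2 + (aeval z hp' - aeval z ep) * ms n1 z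
          - aeval z fp = 0 := by
        linear_combination h2
      have key : aeval z gp * (aeval z Qp - aeval z D1p * M z) ^ 2
          + (aeval z hp' - aeval z ep) * ((aeval z Qp - aeval z D1p * M z)
            * (aeval z C1p * M z - aeval z Pp))
          - aeval z fp * (aeval z C1p * M z - aeval z Pp) ^ 2 = 0 := by
        rw [hsub]
        linear_combination ((aeval z C1p * M z - aeval z Pp) ^ 2) * hquad
      linear_combination key
    intro z hz
    have := QIaux.vanish_on_upper F hFd R₀ hR₀0 hF0 z hz
    rw [hFdef] at this
    linear_combination this
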